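/- Let μ be a finite measure and f ∈ L²(μ). Then both pairs (𝟙_{f ≥ 0}, f) and (𝟙_{f > 0}, f) are admissible: for the first take φ_k = f and ε_k = 1/k; for the second take φ_k = f − 1/k and ε_k = 1/k². Moreover, if μ({f = 0}) > 0, then 𝟙_{f ≥ 0} ≠ 𝟙_{f > 0} as elements of L¹(μ); hence the first component z of an admissible pair (z, φ) is in general not uniquely determined by φ. -/

import Mathlib

open MeasureTheory Filter Topology

noncomputable section

/-- The smoothed level set projection `P_ε`. -/
def Pe (ε t : ℝ) : ℝ := max 0 (min 1 (1 + t / ε))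

/-- The level set projection `P` (Heaviside function, `P t = 1` iff `0 ≤ t`). -/
def Pstep (t : ℝ) : ℝ := if 0 ≤ t then 1 else 0

lemma Pe_continuous (ε : ℝ) : Continuous (Pe ε) :=
  continuous_const.max (continuous_const.min (continuous_const.add (continuous_id.div_const ε)))

lemma Pe_bound (ε t : ℝ) : ‖Pe ε t‖ ≤ 1 := by
  unfold Pe
  rw [Real.norm_eq_abs, abs_le]
  refine ⟨by linarith [le_max_left (0:ℝ) (min 1 (1 + t / ε))], ?_⟩
  exact max_le (by norm_num) (min_le_left _ _)

lemma Pstep_measurable : Measurable Pstep :=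
  Measurable.ite measurableSet_Ici measurable_const measurable_const

lemma Pstep_bound (t : ℝ) : ‖Pstep t‖ ≤ 1 := by
  unfold Pstep; split <;> simp

variable {X : Type*} [MeasurableSpace X] (μ : Measure X) [IsFiniteMeasure μ]

/-- Composition `P_ε ∘ f` of the smoothed projection with an `L²` function, as an
element of `L¹` (the measure being finite). -/
def compPe (ε : ℝ) (f : Lp ℝ 2 μ) : Lp ℝ 1 μ :=
  (MemLp.of_bound ((Pe_continuous ε).comp_aestronglyMeasurable (Lp.aestronglyMeasurable f)) 1
    (Eventually.of_forall fun x => Pe_bound ε (f x))).toLp _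

/-- Composition `P ∘ f` of the discontinuous projection with an `L²` function, as an
element of `L¹`. -/
def compP (f : Lp ℝ 2 μ) : Lp ℝ 1 μ :=
  (MemLp.of_bound
    (Pstep_measurable.comp_aemeasurable (Lp.aestronglyMeasurable f).aemeasurable).aestronglyMeasurable 1
    (Eventually.of_forall fun x => Pstep_bound (f x))).toLp _

/-- A pair `(z, φ) ∈ L¹ × L²` is admissible if `z` is the `L¹` limit of `P_{ε_k} ∘ φ_k`
for some positive `ε_k → 0` and some `φ_k → φ` in `L²`. -/
def Admissible (z : Lp ℝ 1 μ) (φ : Lp ℝ 2 μ) : Prop :=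
  ∃ (εs : ℕ → ℝ) (φs : ℕ → Lp ℝ 2 μ),
    (∀ k, 0 < εs k) ∧ Tendsto εs atTop (𝓝 0) ∧
    Tendsto φs atTop (𝓝 φ) ∧
    Tendsto (fun k => compPe μ (εs k) (φs k)) atTop (𝓝 z)

/-- The strict level set projection, `P_> t = 1` iff `0 < t`. -/
def Pstrict (t : ℝ) : ℝ := if 0 < t then 1 else 0

lemma Pstrict_measurable : Measurable Pstrict :=
  Measurable.ite measurableSet_Ioi measurable_const measurable_const

lemma Pstrict_bound (t : ℝ) : ‖Pstrict t‖ ≤ 1 := by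
  unfold Pstrict; split <;> simp

/-- Composition `P_> ∘ f`, i.e. the indicator of `{f > 0}`, as an element of `L¹`. -/
def compPgt (f : Lp ℝ 2 μ) : Lp ℝ 1 μ :=
  (MemLp.of_bound
    (Pstrict_measurable.comp_aemeasurable (Lp.aestronglyMeasurable f).aemeasurable).aestronglyMeasurable 1
    (Eventually.of_forall fun x => Pstrict_bound (f x))).toLp _


open scoped ENNReal NNReal in
private lemma helperL1 {X : Type*} [MeasurableSpace X] {μ : Measure X} [IsFiniteMeasure μ]
    {g : ℕ → X → ℝ} {G : X → ℝ} (hg : ∀ k, MemLp (g k) 1 μ) (hG : MemLp G 1 μ)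
    (hpt : ∀ᵐ x ∂μ, Tendsto (fun k => g k x) atTop (𝓝 (G x)))
    (hb : ∀ k, ∀ᵐ x ∂μ, ‖g k x‖ ≤ 1) (hbG : ∀ᵐ x ∂μ, ‖G x‖ ≤ 1) :
    Tendsto (fun k => (hg k).toLp (g k)) atTop (𝓝 (hG.toLp G)) := by
  rw [Lp.tendsto_Lp_iff_tendsto_eLpNorm'' _ hg G hG]
  have key : Tendsto (fun k => ∫⁻ x, ENNReal.ofReal ‖g k x - G x‖ ∂μ) atTop
      (𝓝 (∫⁻ _, (0 : ℝ≥0∞) ∂μ)) := by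
    apply tendsto_lintegral_of_dominated_convergence' (bound := fun _ => ENNReal.ofReal 2)
    · intro k
      exact (((hg k).aestronglyMeasurable.sub hG.aestronglyMeasurable).norm.aemeasurable).ennreal_ofReal
    · intro k
      filter_upwards [hb k, hbG] with x h1 h2
      exact ENNReal.ofReal_le_ofReal (by
        calc ‖g k x - G x‖ ≤ ‖g k x‖ + ‖G x‖ := norm_sub_le _ _
        _ ≤ 2 := by linarith)
    · simp [lintegral_const, ENNReal.mul_ne_top, measure_ne_top]
    · filter_upwards [hpt] with x hx
      have : Tendsto (fun k => ‖g k x - G x‖) atTop (𝓝 0) :=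
        (tendsto_iff_norm_sub_tendsto_zero.mp hx)
      simpa using (ENNReal.tendsto_ofReal this)
  simp only [lintegral_zero] at key
  refine key.congr fun k => ?_
  rw [eLpNorm_one_eq_lintegral_enorm]
  refine lintegral_congr fun x => ?_
  simp [Pi.sub_apply, ← ofReal_norm_eq_enorm, Real.norm_eq_abs]

private lemma Pe_tendsto_Pstep (t : ℝ) :
    Tendsto (fun k : ℕ => Pe (((k : ℝ) + 1)⁻¹) t) atTop (𝓝 (Pstep t)) := by
  rcases le_or_gt 0 t with h | h
  · have heq : ∀ k : ℕ, Pe (((k : ℝ) + 1)⁻¹) t = 1 := by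
      intro k
      have hε : (0:ℝ) < ((k : ℝ) + 1)⁻¹ := by positivity
      have h1 : (1:ℝ) ≤ 1 + t / ((k : ℝ) + 1)⁻¹ := by
        have := div_nonneg h hε.le; linarith
      unfold Pe
      rw [min_eq_left h1, max_eq_right zero_le_one]
    rw [show Pstep t = 1 from if_pos h]
    simp only [heq]; exact tendsto_const_nhds
  · rw [show Pstep t = 0 from if_neg (not_le.mpr h)]
    refine Tendsto.congr' ?_ tendsto_const_nhds
    filter_upwards [eventually_ge_atTop ⌈(-t⁻¹ : ℝ)⌉₊] with k hk
    have h1 : (-t⁻¹ : ℝ) ≤ (k : ℝ) + 1 := by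
      calc (-t⁻¹ : ℝ) ≤ (⌈(-t⁻¹ : ℝ)⌉₊ : ℝ) := Nat.le_ceil _
      _ ≤ (k : ℝ) := by exact_mod_cast hk
      _ ≤ (k : ℝ) + 1 := by linarith
    have ht : t * t⁻¹ = 1 := mul_inv_cancel₀ (ne_of_lt h)
    have h2 : 1 + t / ((k : ℝ) + 1)⁻¹ ≤ 0 := by
      rw [div_eq_mul_inv, inv_inv]
      nlinarith
    unfold Pe
    rw [eq_comm, max_eq_left (le_trans (min_le_right _ _) h2)]

private lemma Pe_tendsto_Pstrict (t : ℝ) :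
    Tendsto (fun k : ℕ => Pe ((((k : ℝ) + 1) ^ 2)⁻¹) (t - ((k : ℝ) + 1)⁻¹)) atTop
      (𝓝 (Pstrict t)) := by
  rcases lt_or_ge 0 t with h | h
  · rw [show Pstrict t = 1 from if_pos h]
    refine Tendsto.congr' ?_ tendsto_const_nhds
    filter_upwards [eventually_ge_atTop ⌈(t⁻¹ : ℝ)⌉₊] with k hk
    have hk1 : (0:ℝ) < (k : ℝ) + 1 := by positivity
    have h1 : (t⁻¹ : ℝ) ≤ (k : ℝ) + 1 := by
      calc (t⁻¹ : ℝ) ≤ (⌈(t⁻¹ : ℝ)⌉₊ : ℝ) := Nat.le_ceil _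
      _ ≤ (k : ℝ) := by exact_mod_cast hk
      _ ≤ (k : ℝ) + 1 := by linarith
    have h2 : (((k : ℝ) + 1))⁻¹ ≤ t := by
      rw [inv_le_comm₀ hk1 h]
      exact h1
    have hs : (0:ℝ) ≤ t - ((k : ℝ) + 1)⁻¹ := by linarith
    have hε : (0:ℝ) < ((((k : ℝ) + 1) ^ 2)⁻¹) := by positivity
    have h3 : (1:ℝ) ≤ 1 + (t - ((k : ℝ) + 1)⁻¹) / ((((k : ℝ) + 1) ^ 2)⁻¹) := by
      have := div_nonneg hs hε.le; linarith
    unfold Pe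
    rw [eq_comm, min_eq_left h3, max_eq_right zero_le_one]
  · rw [show Pstrict t = 0 from if_neg (not_lt.mpr h)]
    have heq : ∀ k : ℕ, Pe ((((k : ℝ) + 1) ^ 2)⁻¹) (t - ((k : ℝ) + 1)⁻¹) = 0 := by
      intro k
      have hk1 : (0:ℝ) < (k : ℝ) + 1 := by positivity
      have h2 : 1 + (t - ((k : ℝ) + 1)⁻¹) / ((((k : ℝ) + 1) ^ 2)⁻¹) ≤ 0 := by
        rw [div_eq_mul_inv, inv_inv]
        have : (t - ((k : ℝ) + 1)⁻¹) * ((k : ℝ) + 1) ^ 2 ≤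
            (-((k : ℝ) + 1)⁻¹) * ((k : ℝ) + 1) ^ 2 := by
          apply mul_le_mul_of_nonneg_right _ (by positivity)
          linarith
        have hinv : ((k : ℝ) + 1)⁻¹ * ((k : ℝ) + 1) = 1 := inv_mul_cancel₀ (ne_of_gt hk1)
        nlinarith
      unfold Pe
      rw [max_eq_left (le_trans (min_le_right _ _) h2)]
    simp only [heq]; exact tendsto_const_nhds

/-- Remark 2.5: for `f ∈ L²(μ)` both pairs `(𝟙_{f ≥ 0}, f)` and `(𝟙_{f > 0}, f)` are
admissible — for the first take `φ_k = f`, `ε_k = 1/k`, for the second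
`φ_k = f − 1/k`, `ε_k = 1/k²` (indexed with `k ≥ 1`) — and if `μ({f = 0}) > 0`
then `𝟙_{f ≥ 0} ≠ 𝟙_{f > 0}` in `L¹(μ)`; hence `z` is not uniquely determined by
`φ` in an admissible pair `(z, φ)`. -/
theorem admissible_pair_not_unique
    {X : Type*} [MeasurableSpace X] (μ : Measure X) [IsFiniteMeasure μ]
    (f : Lp ℝ 2 μ) :
    Tendsto (fun k : ℕ => compPe μ (((k : ℝ) + 1)⁻¹) f) atTop (𝓝 (compP μ f)) ∧
    Tendsto (fun k : ℕ => compPe μ ((((k : ℝ) + 1) ^ 2)⁻¹)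
        (f - (memLp_const (((k : ℝ) + 1)⁻¹)).toLp _)) atTop (𝓝 (compPgt μ f)) ∧
    Admissible μ (compP μ f) f ∧
    Admissible μ (compPgt μ f) f ∧
    (0 < μ {x | f x = 0} → compP μ f ≠ compPgt μ f) := by
  have hεlim : Tendsto (fun k : ℕ => ((k : ℝ) + 1)⁻¹) atTop (𝓝 0) :=
    tendsto_inv_atTop_zero.comp
      (tendsto_atTop_add_const_right _ 1 tendsto_natCast_atTop_atTop)
  set c : ℕ → Lp ℝ 2 μ := fun k =>
    (memLp_const (((k : ℝ) + 1)⁻¹)).toLp (fun _ => ((k : ℝ) + 1)⁻¹) with hc_def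
  have haek : ∀ k : ℕ, (⇑(f - c k) : X → ℝ) =ᵐ[μ] fun x => f x - ((k : ℝ) + 1)⁻¹ := by
    intro k
    filter_upwards [Lp.coeFn_sub f (c k),
      MemLp.coeFn_toLp (memLp_const (((k : ℝ) + 1)⁻¹) : MemLp _ 2 μ)] with x h1 h2
    rw [h1, Pi.sub_apply, h2]
  have T1 : Tendsto (fun k : ℕ => compPe μ (((k : ℝ) + 1)⁻¹) f) atTop (𝓝 (compP μ f)) := by
    unfold compPe compP
    exact helperL1 (g := fun k x => Pe (((k : ℝ) + 1)⁻¹) (f x)) (G := fun x => Pstep (f x))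
      (fun k => MemLp.of_bound
        ((Pe_continuous _).comp_aestronglyMeasurable (Lp.aestronglyMeasurable f)) 1
        (Eventually.of_forall fun x => Pe_bound _ (f x)))
      (MemLp.of_bound
        (Pstep_measurable.comp_aemeasurable
          (Lp.aestronglyMeasurable f).aemeasurable).aestronglyMeasurable 1
        (Eventually.of_forall fun x => Pstep_bound (f x)))
      (Eventually.of_forall fun x => Pe_tendsto_Pstep (f x))
      (fun k => Eventually.of_forall fun x => Pe_bound _ _)
      (Eventually.of_forall fun x => Pstep_bound _)
  have T2 : Tendsto (fun k : ℕ => compPe μ ((((k : ℝ) + 1) ^ 2)⁻¹) (f - c k)) atTop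
      (𝓝 (compPgt μ f)) := by
    unfold compPe compPgt
    refine helperL1 (g := fun k x => Pe ((((k : ℝ) + 1) ^ 2)⁻¹) ((f - c k) x))
      (G := fun x => Pstrict (f x))
      (fun k => MemLp.of_bound
        ((Pe_continuous _).comp_aestronglyMeasurable (Lp.aestronglyMeasurable (f - c k))) 1
        (Eventually.of_forall fun x => Pe_bound _ _))
      (MemLp.of_bound
        (Pstrict_measurable.comp_aemeasurable
          (Lp.aestronglyMeasurable f).aemeasurable).aestronglyMeasurable 1
        (Eventually.of_forall fun x => Pstrict_bound (f x)))
      ?_ (fun k => Eventually.of_forall fun x => Pe_bound _ _)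
      (Eventually.of_forall fun x => Pstrict_bound _)
    filter_upwards [ae_all_iff.mpr haek] with x hx
    refine Tendsto.congr (fun k => ?_) (Pe_tendsto_Pstrict (f x))
    rw [hx k]
  have hclim : Tendsto (fun k : ℕ => f - c k) atTop (𝓝 f) := by
    have hc1 : ∀ k : ℕ, c k = ((k : ℝ) + 1)⁻¹ • (memLp_const (1 : ℝ)).toLp (fun _ => (1 : ℝ)) := by
      intro k
      simp only [hc_def]
      rw [← MemLp.toLp_const_smul, MemLp.toLp_eq_toLp_iff]
      exact Eventually.of_forall fun x => by simp
    have hzero : Tendsto (fun k : ℕ => c k) atTop (𝓝 0) := by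
      simp only [hc1]
      have h := hεlim.smul_const ((memLp_const (1 : ℝ)).toLp (fun _ => (1 : ℝ)) : Lp ℝ 2 μ)
      rw [zero_smul] at h
      exact h
    have h2 := (tendsto_const_nhds : Tendsto (fun _ : ℕ => f) atTop (𝓝 f)).sub hzero
    rw [sub_zero] at h2
    exact h2
  refine ⟨T1, T2, ⟨fun k => ((k : ℝ) + 1)⁻¹, fun _ => f, fun k => by positivity, hεlim,
      tendsto_const_nhds, T1⟩,
    ⟨fun k => (((k : ℝ) + 1) ^ 2)⁻¹, fun k => f - c k, fun k => by positivity, ?_, hclim, T2⟩, ?_⟩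
  · have := hεlim.mul hεlim
    simpa [sq, mul_inv] using this
  · intro hpos heq
    have h1 : ⇑(compP μ f) =ᵐ[μ] fun x => Pstep (f x) := MemLp.coeFn_toLp _
    have h2 : ⇑(compPgt μ f) =ᵐ[μ] fun x => Pstrict (f x) := MemLp.coeFn_toLp _
    have h3 : (fun x => Pstep (f x)) =ᵐ[μ] fun x => Pstrict (f x) :=
      h1.symm.trans (heq ▸ h2)
    have h4 : μ {x | ¬ Pstep (f x) = Pstrict (f x)} = 0 := h3
    have h5 : {x | f x = 0} ⊆ {x | ¬ Pstep (f x) = Pstrict (f x)} := by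
      intro x hx
      simp only [Set.mem_setOf_eq] at hx ⊢
      rw [hx]
      unfold Pstep Pstrict
      norm_num
    exact absurd (le_trans (measure_mono h5) h4.le) (not_le.mpr hpos)
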